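/- For all integers N ≥ 0 and ℓ ≥ 0 and all real numbers x > 0 and y > 0, one has A_N^ℓ(x,y) > 0. -/

import Mathlib

open Matrix Finset


lemma hess_det_pos : ∀ (n : ℕ) (B : Matrix (Fin n) (Fin n) ℝ),
    (∀ i, 0 < B i i) → (∀ i j : Fin n, (i : ℕ) < (j : ℕ) → 0 ≤ B i j) →
    (∀ i j : Fin n, (i : ℕ) = (j : ℕ) + 1 → B i j ≤ 0) →
    (∀ i j : Fin n, (j : ℕ) + 1 < (i : ℕ) → B i j = 0) → 0 < B.det := by
  intro n
  induction n with
  | zero => intro B _ _ _ _; simp [Matrix.det_fin_zero]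
  | succ m ih =>
    intro B hd hu hs hz
    match m, ih with
    | 0, _ => rw [Matrix.det_fin_one]; exact hd 0
    | m' + 1, ih =>
      have h10 : ((1 : Fin (m' + 2)) : ℕ) = 1 := rfl
      have h00 : ((0 : Fin (m' + 2)) : ℕ) = 0 := rfl
      have hne : (1 : Fin (m' + 2)) ≠ 0 := by
        intro h; exact absurd (congrArg Fin.val h) (by simp [h10])
      set c : ℝ := -B 1 0 / B 0 0 with hc
      have hB00 : 0 < B 0 0 := hd 0
      have hcpos : 0 ≤ c := by
        apply div_nonneg _ hB00.le
        have := hs 1 0 (by simp [h10, h00])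
        linarith
      set B' := B.updateRow 1 (B 1 + c • B 0) with hB'
      have hdet : B'.det = B.det := Matrix.det_updateRow_add_smul_self B hne c
      have hB'app : ∀ (i : Fin (m' + 2)) (j : Fin (m' + 2)), i ≠ 1 → B' i j = B i j := by
        intro i j h; rw [hB', Matrix.updateRow_ne h]
      have hB'row1 : ∀ j : Fin (m' + 2), B' 1 j = B 1 j + c * B 0 j := by
        intro j; rw [hB', Matrix.updateRow_self]; simp
      have hcol : ∀ i : Fin (m' + 2), i ≠ 0 → B' i 0 = 0 := by
        intro i hi
        by_cases h1 : i = 1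
        · subst h1
          rw [hB'row1, hc]
          field_simp
          ring
        · rw [hB'app i 0 h1]
          apply hz
          have hv0 : (i : ℕ) ≠ 0 := fun h => hi (Fin.ext (by simp [h, h00]))
          have hv1 : (i : ℕ) ≠ 1 := fun h => h1 (Fin.ext (by simp [h, h10]))
          simp [h00]; omega
      rw [← hdet, Matrix.det_succ_column_zero]
      rw [Finset.sum_eq_single 0]
      · simp only [Fin.val_zero, pow_zero, one_mul, Fin.succAbove_zero]
        have hB'00 : B' 0 0 = B 0 0 := hB'app 0 0 (by simp [hne.symm])
        rw [hB'00]
        apply mul_pos hB00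
        apply ih
        · intro i
          simp only [Matrix.submatrix_apply]
          by_cases h1 : i.succ = (1 : Fin (m' + 2))
          · rw [h1, hB'row1]
            have h2 : 0 ≤ B 0 1 := hu 0 1 (by simp [h00, h10])
            have h3 : 0 < B 1 1 := hd 1
            nlinarith
          · rw [hB'app _ _ h1]; exact hd _
        · intro i j hij
          simp only [Matrix.submatrix_apply]
          by_cases h1 : i.succ = (1 : Fin (m' + 2))
          · rw [h1, hB'row1]
            have hj : (1 : ℕ) < ((j.succ : Fin (m' + 2)) : ℕ) := by
              have := congrArg Fin.val h1
              simp [Fin.val_succ, h10] at this ⊢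
              omega
            have h2 : 0 ≤ B 1 j.succ := hu 1 j.succ (by simpa [h10] using hj)
            have h3 : 0 ≤ B 0 j.succ := hu 0 j.succ (by simp [h00, Fin.val_succ])
            nlinarith
          · rw [hB'app _ _ h1]
            exact hu _ _ (by simp [Fin.val_succ]; omega)
        · intro i j hij
          simp only [Matrix.submatrix_apply]
          have h1 : i.succ ≠ (1 : Fin (m' + 2)) := by
            intro h
            have := congrArg Fin.val h
            simp [Fin.val_succ, h10] at this
            subst this; simp at hij
          rw [hB'app _ _ h1]
          exact hs _ _ (by simp [Fin.val_succ]; omega)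
        · intro i j hij
          simp only [Matrix.submatrix_apply]
          have h1 : i.succ ≠ (1 : Fin (m' + 2)) := by
            intro h
            have := congrArg Fin.val h
            simp [Fin.val_succ, h10] at this
            subst this; simp at hij
          rw [hB'app _ _ h1]
          exact hz _ _ (by simp [Fin.val_succ]; omega)
      · intro i _ hi
        rw [hcol i hi]; ring
      · intro h; exact absurd (Finset.mem_univ _) h

lemma apos_sum_collapse (ℓ i : ℕ) (hi : i < ℓ) (g : ℕ → ℝ)
    (hlow : ∀ k, k + 1 < i → g k = 0)
    (hhigh : ∀ k, i + 1 < k → g k = 0)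
    (htop : ℓ = i + 1 → g (i + 1) = 0) :
    ∑ k ∈ Finset.range ℓ, g k = (if i = 0 then 0 else g (i - 1)) + g i + g (i + 1) := by
  have h1 : ∑ k ∈ Finset.range ℓ, g k = ∑ k ∈ Finset.range (i + 2), g k := by
    rcases le_or_gt (i + 2) ℓ with h | h
    · refine (Finset.sum_subset (Finset.range_subset_range.mpr h) fun k hk hnk => ?_).symm
      simp only [Finset.mem_range] at hk hnk
      exact hhigh k (by omega)
    · have hl : ℓ = i + 1 := by omega
      refine Finset.sum_subset (Finset.range_subset_range.mpr (by omega)) fun k hk hnk => ?_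
      simp only [Finset.mem_range] at hk hnk
      have : k = i + 1 := by omega
      rw [this]; exact htop hl
  rw [h1]
  cases i with
  | zero => simp [Finset.sum_range_succ]
  | succ m =>
    rw [show m + 1 + 2 = m + 3 from rfl, Finset.sum_range_succ, Finset.sum_range_succ,
      Finset.sum_range_succ]
    have hz : ∑ k ∈ Finset.range m, g k = 0 :=
      Finset.sum_eq_zero fun k hk => hlow k (by simp at hk; omega)
    rw [hz, if_neg (Nat.succ_ne_zero m)]
    simp only [Nat.add_sub_cancel]
    ring


/-- The tridiagonal matrix `M_ℓ^{(N)}(x)` over `ℝ` (1-based indices): diagonal entries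
`(N+i)(x-ℓ+2i-1)`, superdiagonal entries `N+i`, subdiagonal entries
`(M)_{i+1,i} = -(N+i+1)·i·(ℓ-i)`. -/
def Mmat (N ℓ : ℕ) (x : ℝ) : Matrix (Fin ℓ) (Fin ℓ) ℝ :=
  Matrix.of fun i j =>
    if (i : ℕ) = (j : ℕ) then
      ((N : ℝ) + (i : ℕ) + 1) * (x - (ℓ : ℝ) + 2 * ((i : ℕ) + 1) - 1)
    else if (j : ℕ) = (i : ℕ) + 1 then (N : ℝ) + (i : ℕ) + 1
    else if (i : ℕ) = (j : ℕ) + 1 then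
      -(((N : ℝ) + (j : ℕ) + 2) * ((j : ℕ) + 1 : ℝ) * ((ℓ : ℝ) - ((j : ℕ) + 1)))
    else 0

noncomputable section

def Mentry (N ℓ : ℕ) (x : ℝ) (i j : ℕ) : ℝ :=
  if i = j then ((N : ℝ) + i + 1) * (x - (ℓ : ℝ) + 2 * ((i : ℕ) + 1) - 1)
  else if j = i + 1 then (N : ℝ) + i + 1
  else if i = j + 1 then -(((N : ℝ) + j + 2) * ((j : ℕ) + 1 : ℝ) * ((ℓ : ℝ) - ((j : ℕ) + 1)))
  else 0

def Wentry (i j : ℕ) : ℝ := if i ≤ j then ((Nat.factorial (j - i) : ℝ))⁻¹ else 0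

def MsEntry (N ℓ : ℕ) (x : ℝ) (i j : ℕ) : ℝ :=
  if i = j then ((N : ℝ) + 1 + i) * x + ((i : ℝ) + 1) * ((ℓ : ℝ) - 1 - i)
  else if j = i + 1 then -x
  else if i = j + 1 then -(((N : ℝ) + 1 + i) * (i : ℝ) * ((ℓ : ℝ) - i))
  else 0

lemma Mmat_eq_Mentry (N ℓ : ℕ) (x : ℝ) (i j : Fin ℓ) :
    Mmat N ℓ x i j = Mentry N ℓ x (i : ℕ) (j : ℕ) := rfl

-- branch lemmas
lemma Mentry_self (N ℓ : ℕ) (x : ℝ) (i : ℕ) :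
    Mentry N ℓ x i i = ((N : ℝ) + i + 1) * (x - (ℓ : ℝ) + 2 * ((i : ℝ) + 1) - 1) := by
  unfold Mentry; rw [if_pos rfl]

lemma Mentry_super (N ℓ : ℕ) (x : ℝ) (i : ℕ) :
    Mentry N ℓ x i (i + 1) = (N : ℝ) + i + 1 := by
  unfold Mentry; rw [if_neg (by omega), if_pos rfl]

lemma Mentry_sub (N ℓ : ℕ) (x : ℝ) (j : ℕ) :
    Mentry N ℓ x (j + 1) j = -(((N : ℝ) + j + 2) * ((j : ℝ) + 1) * ((ℓ : ℝ) - ((j : ℝ) + 1))) := by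
  unfold Mentry; rw [if_neg (by omega), if_neg (by omega), if_pos rfl]

lemma Mentry_zero (N ℓ : ℕ) (x : ℝ) {i j : ℕ} (h1 : i ≠ j) (h2 : j ≠ i + 1) (h3 : i ≠ j + 1) :
    Mentry N ℓ x i j = 0 := by
  unfold Mentry; rw [if_neg h1, if_neg h2, if_neg h3]

lemma MsEntry_self (N ℓ : ℕ) (x : ℝ) (i : ℕ) :
    MsEntry N ℓ x i i = ((N : ℝ) + 1 + i) * x + ((i : ℝ) + 1) * ((ℓ : ℝ) - 1 - i) := by
  unfold MsEntry; rw [if_pos rfl]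

lemma MsEntry_super (N ℓ : ℕ) (x : ℝ) (i : ℕ) : MsEntry N ℓ x i (i + 1) = -x := by
  unfold MsEntry; rw [if_neg (by omega), if_pos rfl]

lemma MsEntry_sub (N ℓ : ℕ) (x : ℝ) (j : ℕ) :
    MsEntry N ℓ x (j + 1) j
      = -(((N : ℝ) + 1 + ((j : ℝ) + 1)) * ((j : ℝ) + 1) * ((ℓ : ℝ) - ((j : ℝ) + 1))) := by
  unfold MsEntry; rw [if_neg (by omega), if_neg (by omega), if_pos rfl]
  push_cast; ring

lemma MsEntry_zero (N ℓ : ℕ) (x : ℝ) {i j : ℕ} (h1 : i ≠ j) (h2 : j ≠ i + 1) (h3 : i ≠ j + 1) :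
    MsEntry N ℓ x i j = 0 := by
  unfold MsEntry; rw [if_neg h1, if_neg h2, if_neg h3]

lemma Wentry_of_le {i j : ℕ} (h : i ≤ j) : Wentry i j = ((Nat.factorial (j - i) : ℝ))⁻¹ :=
  if_pos h

lemma Wentry_of_gt {i j : ℕ} (h : j < i) : Wentry i j = 0 := if_neg (by omega)

lemma Wentry_self (i : ℕ) : Wentry i i = 1 := by
  rw [Wentry_of_le le_rfl]; simp

def Wmat (ℓ : ℕ) : Matrix (Fin ℓ) (Fin ℓ) ℝ := Matrix.of fun i j => Wentry i j

def MsMat (N ℓ : ℕ) (x : ℝ) : Matrix (Fin ℓ) (Fin ℓ) ℝ :=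
  Matrix.of fun i j => MsEntry N ℓ x i j

end

noncomputable section

set_option maxHeartbeats 1000000 in
lemma MW_eq (N ℓ : ℕ) (x : ℝ) : Mmat N ℓ x * Wmat ℓ = Wmat ℓ * MsMat N ℓ x := by
  ext i j
  have hi : (i : ℕ) < ℓ := i.isLt
  have hj : (j : ℕ) < ℓ := j.isLt
  rw [Matrix.mul_apply, Matrix.mul_apply]
  have hL : (∑ k : Fin ℓ, Mmat N ℓ x i k * Wmat ℓ k j)
      = ∑ k ∈ Finset.range ℓ, (fun k => Mentry N ℓ x (i : ℕ) k * Wentry k (j : ℕ)) k :=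
    Fin.sum_univ_eq_sum_range (fun k => Mentry N ℓ x (i : ℕ) k * Wentry k (j : ℕ)) ℓ
  have hR : (∑ k : Fin ℓ, Wmat ℓ i k * MsMat N ℓ x k j)
      = ∑ k ∈ Finset.range ℓ, (fun k => Wentry (i : ℕ) k * MsEntry N ℓ x k (j : ℕ)) k :=
    Fin.sum_univ_eq_sum_range (fun k => Wentry (i : ℕ) k * MsEntry N ℓ x k (j : ℕ)) ℓ
  rw [hL, hR]
  rw [apos_sum_collapse ℓ (i : ℕ) hi _
      (fun k hk => by rw [Mentry_zero N ℓ x (by omega) (by omega) (by omega), zero_mul])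
      (fun k hk => by rw [Mentry_zero N ℓ x (by omega) (by omega) (by omega), zero_mul])
      (fun hk => by rw [Wentry_of_gt (by omega), mul_zero]),
    apos_sum_collapse ℓ (j : ℕ) hj _
      (fun k hk => by rw [MsEntry_zero N ℓ x (by omega) (by omega) (by omega), mul_zero])
      (fun k hk => by rw [MsEntry_zero N ℓ x (by omega) (by omega) (by omega), mul_zero])
      (fun hk => by
        rw [MsEntry_sub]
        have hc : ((ℓ : ℝ)) = ((j : ℕ) : ℝ) + 1 := by exact_mod_cast congrArg (Nat.cast : ℕ → ℝ) hk
        rw [hc]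
        ring)]
  clear hL hR
  revert hi hj
  generalize (i : ℕ) = I
  generalize (j : ℕ) = J
  intro hi hj
  rcases lt_trichotomy (J + 1) I with hIJ | hIJ | hIJ
  · -- J + 1 < I : everything vanishes
    rw [if_neg (by omega), Wentry_of_gt (show J < I - 1 by omega), Wentry_of_gt (show J < I by omega),
      Wentry_of_gt (show J < I + 1 by omega), Wentry_of_gt (show J + 1 < I by omega)]
    rcases Nat.eq_zero_or_pos J with hJ0 | hJ0
    · rw [if_pos hJ0]; ring
    · rw [if_neg (by omega), Wentry_of_gt (show J - 1 < I by omega)]; ring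
  · -- I = J + 1
    rw [if_neg (by omega), show I - 1 = J by omega, Wentry_self,
      Wentry_of_gt (show J < I by omega), Wentry_of_gt (show J < I + 1 by omega),
      show I = J + 1 from hIJ.symm, Mentry_sub, Wentry_self, MsEntry_sub]
    rcases Nat.eq_zero_or_pos J with hJ0 | hJ0
    · rw [if_pos hJ0]; push_cast; ring
    · rw [if_neg (by omega), Wentry_of_gt (show J - 1 < J + 1 by omega)]
      push_cast; ring
  · -- I ≤ J
    have hIle : I ≤ J := by omega
    obtain ⟨d, rfl⟩ : ∃ d, J = I + d := ⟨J - I, by omega⟩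
    rw [Mentry_self, Mentry_super, MsEntry_self,
      Wentry_of_le (show I ≤ I + d by omega), show I + d - I = d by omega,
      Wentry_of_le (show I ≤ I + d + 1 by omega), show I + d + 1 - I = d + 1 by omega,
      MsEntry_sub]
    have hfd : (Nat.factorial d : ℝ) ≠ 0 := Nat.cast_ne_zero.mpr (Nat.factorial_ne_zero d)
    have hfd1 : ((Nat.factorial (d + 1) : ℝ)) = ((d : ℝ) + 1) * (Nat.factorial d : ℝ) := by
      rw [Nat.factorial_succ]; push_cast; ring
    rcases Nat.eq_zero_or_pos d with hd0 | hd0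
    · -- d = 0
      subst hd0
      rw [Wentry_of_gt (show I + 0 < I + 1 by omega)]
      rcases Nat.eq_zero_or_pos I with hI0 | hI0
      · subst hI0
        rw [if_pos (show (0 : ℕ) = 0 from rfl), if_pos (show 0 + 0 = 0 from rfl)]
        norm_num [Nat.factorial]
        push_cast
        ring
      · obtain ⟨m, rfl⟩ : ∃ m, I = m + 1 := ⟨I - 1, by omega⟩
        rw [if_neg (show ¬(m + 1 = 0) by omega), if_neg (show ¬(m + 1 + 0 = 0) by omega),
          show m + 1 - 1 = m by omega, Mentry_sub,
          Wentry_of_le (show m ≤ m + 1 + 0 by omega), show m + 1 + 0 - m = 1 by omega,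
          Wentry_of_gt (show m < m + 1 by omega)]
        norm_num [Nat.factorial]
        push_cast
        ring
    · -- d = e + 1
      obtain ⟨e, rfl⟩ : ∃ e, d = e + 1 := ⟨d - 1, by omega⟩
      rw [show I + (e + 1) - 1 = I + e by omega]
      have hw1 : Wentry I (I + e) = ((Nat.factorial e : ℝ))⁻¹ := by
        rw [Wentry_of_le (by omega), show I + e - I = e by omega]
      have hw2 : Wentry (I + 1) (I + (e + 1)) = ((Nat.factorial e : ℝ))⁻¹ := by
        rw [Wentry_of_le (by omega), show I + (e + 1) - (I + 1) = e by omega]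
      have hms : MsEntry N ℓ x (I + e) (I + (e + 1)) = -x := by
        unfold MsEntry; rw [if_neg (by omega), if_pos (by omega)]
      rw [hw1, hw2, hms]
      have hfe : (Nat.factorial e : ℝ) ≠ 0 := Nat.cast_ne_zero.mpr (Nat.factorial_ne_zero e)
      have hfe1 : ((Nat.factorial (e + 1) : ℝ)) = ((e : ℝ) + 1) * (Nat.factorial e : ℝ) := by
        rw [Nat.factorial_succ]; push_cast; ring
      have hfe2 : ((Nat.factorial (e + 1 + 1) : ℝ))
          = ((e : ℝ) + 2) * ((e : ℝ) + 1) * (Nat.factorial e : ℝ) := by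
        rw [Nat.factorial_succ]; push_cast; rw [hfe1]; ring
      have he1 : ((e : ℝ) + 1) ≠ 0 := by positivity
      have he2 : ((e : ℝ) + 2) ≠ 0 := by positivity
      rcases Nat.eq_zero_or_pos I with hI0 | hI0
      · subst hI0
        rw [if_pos (show (0 : ℕ) = 0 from rfl), if_neg (show ¬(0 + (e + 1) = 0) by omega),
          hfe2, hfe1]
        push_cast
        field_simp
        ring
      · obtain ⟨m, rfl⟩ : ∃ m, I = m + 1 := ⟨I - 1, by omega⟩
        rw [if_neg (show ¬(m + 1 = 0) by omega), if_neg (show ¬(m + 1 + (e + 1) = 0) by omega),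
          show m + 1 - 1 = m by omega, Mentry_sub,
          Wentry_of_le (show m ≤ m + 1 + (e + 1) by omega),
          show m + 1 + (e + 1) - m = e + 1 + 1 by omega, hfe2, hfe1]
        push_cast
        field_simp
        ring


def gProd (N i j : ℕ) : ℝ := (∏ k ∈ Finset.Icc i j, ((N : ℝ) + 1 + k))⁻¹

lemma gProd_pos (N i j : ℕ) : 0 < gProd N i j := by
  unfold gProd
  exact inv_pos.mpr (Finset.prod_pos fun k _ => by positivity)

lemma gProd_self (N i : ℕ) : gProd N i i = ((N : ℝ) + 1 + i)⁻¹ := by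
  unfold gProd; rw [Finset.Icc_self, Finset.prod_singleton]

lemma gProd_split (N : ℕ) {i j : ℕ} (h : i ≤ j) :
    ((N : ℝ) + 1 + i) * gProd N i j = gProd N (i + 1) j := by
  unfold gProd
  rw [Finset.Icc_eq_cons_Ioc h, Finset.prod_cons, ← Finset.Icc_add_one_left_eq_Ioc]
  have ha : ((N : ℝ) + 1 + i) ≠ 0 := by positivity
  rw [mul_inv, ← mul_assoc, mul_inv_cancel₀ ha, one_mul]

def TsEntry (N : ℕ) (i j : ℕ) : ℝ := if i = j then (N : ℝ) + 1 + i else if j = i + 1 then -1 else 0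

def BEntry (N ℓ : ℕ) (x y : ℝ) (i j : ℕ) : ℝ :=
  if i = j then x + y * gProd N i i
  else if i = j + 1 then ((j : ℝ) + 1) * ((j : ℝ) + 1 - (ℓ : ℝ))
  else if i < j then y * gProd N i j
  else 0

lemma TsEntry_self (N i : ℕ) : TsEntry N i i = (N : ℝ) + 1 + i := if_pos rfl

lemma TsEntry_super (N i : ℕ) : TsEntry N i (i + 1) = -1 := by
  unfold TsEntry; rw [if_neg (by omega), if_pos rfl]

lemma TsEntry_zero (N : ℕ) {i j : ℕ} (h1 : i ≠ j) (h2 : j ≠ i + 1) : TsEntry N i j = 0 := by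
  unfold TsEntry; rw [if_neg h1, if_neg h2]

lemma BEntry_diag (N ℓ : ℕ) (x y : ℝ) (i : ℕ) :
    BEntry N ℓ x y i i = x + y * gProd N i i := if_pos rfl

lemma BEntry_sub (N ℓ : ℕ) (x y : ℝ) (j : ℕ) :
    BEntry N ℓ x y (j + 1) j = ((j : ℝ) + 1) * ((j : ℝ) + 1 - (ℓ : ℝ)) := by
  unfold BEntry; rw [if_neg (by omega), if_pos rfl]

lemma BEntry_upper (N ℓ : ℕ) (x y : ℝ) {i j : ℕ} (h : i < j) :
    BEntry N ℓ x y i j = y * gProd N i j := by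
  unfold BEntry; rw [if_neg (by omega), if_neg (by omega), if_pos h]

lemma BEntry_zero (N ℓ : ℕ) (x y : ℝ) {i j : ℕ} (h : j + 1 < i) : BEntry N ℓ x y i j = 0 := by
  unfold BEntry; rw [if_neg (by omega), if_neg (by omega), if_neg (by omega)]

def TsMat (N ℓ : ℕ) : Matrix (Fin ℓ) (Fin ℓ) ℝ := Matrix.of fun i j => TsEntry N i j

def BMat (N ℓ : ℕ) (x y : ℝ) : Matrix (Fin ℓ) (Fin ℓ) ℝ := Matrix.of fun i j => BEntry N ℓ x y i j

set_option maxHeartbeats 1000000 in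
lemma TsB_eq (N ℓ : ℕ) (x y : ℝ) :
    TsMat N ℓ * BMat N ℓ x y = y • (1 : Matrix (Fin ℓ) (Fin ℓ) ℝ) + MsMat N ℓ x := by
  ext i j
  have hi : (i : ℕ) < ℓ := i.isLt
  have hj : (j : ℕ) < ℓ := j.isLt
  rw [Matrix.mul_apply, Matrix.add_apply, Matrix.smul_apply, Matrix.one_apply]
  have hone : (if i = j then (1 : ℝ) else 0) = (if (i : ℕ) = (j : ℕ) then (1 : ℝ) else 0) := by
    by_cases h : i = j
    · rw [if_pos h, if_pos (by rw [h])]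
    · rw [if_neg h, if_neg (fun hv => h (Fin.ext hv))]
  rw [hone]
  have hL : (∑ k : Fin ℓ, TsMat N ℓ i k * BMat N ℓ x y k j)
      = ∑ k ∈ Finset.range ℓ, (fun k => TsEntry N (i : ℕ) k * BEntry N ℓ x y k (j : ℕ)) k :=
    Fin.sum_univ_eq_sum_range (fun k => TsEntry N (i : ℕ) k * BEntry N ℓ x y k (j : ℕ)) ℓ
  rw [hL]
  rw [apos_sum_collapse ℓ (i : ℕ) hi _
      (fun k hk => by rw [TsEntry_zero N (by omega) (by omega), zero_mul])
      (fun k hk => by rw [TsEntry_zero N (by omega) (by omega), zero_mul])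
      (fun hk => by
        have hB : BEntry N ℓ x y ((i : ℕ) + 1) (j : ℕ) = 0 := by
          rcases Nat.lt_trichotomy ((i : ℕ) + 1) ((j : ℕ) + 1) with h | h | h
          · omega
          · unfold BEntry
            rw [if_neg (by omega), if_pos (by omega)]
            have hc : ((ℓ : ℝ)) = ((j : ℕ) : ℝ) + 1 := by
              have : ℓ = (j : ℕ) + 1 := by omega
              exact_mod_cast congrArg (Nat.cast : ℕ → ℝ) this
            rw [hc]; ring
          · exact BEntry_zero N ℓ x y (by omega)
        rw [hB, mul_zero])]
  have hTs1 : (if (i : ℕ) = 0 then (0 : ℝ)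
      else TsEntry N (i : ℕ) ((i : ℕ) - 1) * BEntry N ℓ x y ((i : ℕ) - 1) (j : ℕ)) = 0 := by
    rcases Nat.eq_zero_or_pos (i : ℕ) with h | h
    · rw [if_pos h]
    · rw [if_neg (by omega), TsEntry_zero N (by omega) (by omega), zero_mul]
  rw [hTs1, TsEntry_self, TsEntry_super, zero_add,
    show MsMat N ℓ x i j = MsEntry N ℓ x (i : ℕ) (j : ℕ) from rfl]
  simp only [smul_eq_mul]
  clear hL hTs1 hone
  revert hi hj
  generalize (i : ℕ) = I
  generalize (j : ℕ) = J
  intro hi hj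
  rcases Nat.lt_trichotomy I J with hIJ | hIJ | hIJ
  · -- I < J
    rw [if_neg (by omega), BEntry_upper N ℓ x y hIJ]
    rcases Nat.lt_or_ge (I + 1) J with h2 | h2
    · rw [BEntry_upper N ℓ x y h2, MsEntry_zero N ℓ x (by omega) (by omega) (by omega),
        ← mul_assoc, mul_comm ((N : ℝ) + 1 + I) y, mul_assoc, gProd_split N (by omega : I ≤ J)]
      ring
    · have hJ : J = I + 1 := by omega
      subst hJ
      rw [BEntry_diag, MsEntry_super, ← mul_assoc, mul_comm ((N : ℝ) + 1 + I) y, mul_assoc,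
        gProd_split N (by omega : I ≤ I + 1)]
      ring
  · -- I = J
    subst hIJ
    rw [if_pos rfl, BEntry_diag, BEntry_sub, MsEntry_self, gProd_self]
    have ha : ((N : ℝ) + 1 + I) ≠ 0 := by positivity
    field_simp
    ring
  · -- J < I
    rw [if_neg (by omega)]
    rcases Nat.lt_or_ge (J + 1) I with h2 | h2
    · rw [BEntry_zero N ℓ x y h2, BEntry_zero N ℓ x y (by omega),
        MsEntry_zero N ℓ x (by omega) (by omega) (by omega)]
      ring
    · have hI : I = J + 1 := by omega
      subst hI
      rw [BEntry_sub, BEntry_zero N ℓ x y (by omega), MsEntry_sub]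
      push_cast
      ring

lemma Wmat_det (ℓ : ℕ) : (Wmat ℓ).det = 1 := by
  have hbt : (Wmat ℓ).BlockTriangular id := by
    intro i j h
    exact Wentry_of_gt (by exact h)
  rw [Matrix.det_of_upperTriangular hbt]
  have h1 : ∀ i : Fin ℓ, Wmat ℓ i i = 1 := fun i => Wentry_self (i : ℕ)
  rw [Finset.prod_congr rfl fun i _ => h1 i, Finset.prod_const_one]

lemma TsMat_det_pos (N ℓ : ℕ) : 0 < (TsMat N ℓ).det := by
  have hbt : (TsMat N ℓ).BlockTriangular id := by
    intro i j h
    have hv : (j : ℕ) < (i : ℕ) := h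
    exact TsEntry_zero N (by omega) (by omega)
  rw [Matrix.det_of_upperTriangular hbt]
  exact Finset.prod_pos fun i _ => by
    rw [show TsMat N ℓ i i = TsEntry N (i : ℕ) (i : ℕ) from rfl, TsEntry_self]; positivity

end

/-- The value `A_N^ℓ(x,y) = det(y·I_ℓ + M_ℓ^{(N)}(x))`. -/
def APoly (N ℓ : ℕ) (x y : ℝ) : ℝ :=
  (y • (1 : Matrix (Fin ℓ) (Fin ℓ) ℝ) + Mmat N ℓ x).det

/-- `A_N^ℓ(x,y) > 0` for all `x, y > 0`. -/
theorem APoly_pos (N ℓ : ℕ) (x y : ℝ) (hx : 0 < x) (hy : 0 < y) :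
    0 < APoly N ℓ x y := by
  have key : (y • (1 : Matrix (Fin ℓ) (Fin ℓ) ℝ) + Mmat N ℓ x) * Wmat ℓ
      = Wmat ℓ * (y • (1 : Matrix (Fin ℓ) (Fin ℓ) ℝ) + MsMat N ℓ x) := by
    rw [Matrix.add_mul, Matrix.mul_add, Matrix.smul_mul, Matrix.mul_smul, one_mul, mul_one,
      MW_eq]
  have hdets : (y • (1 : Matrix (Fin ℓ) (Fin ℓ) ℝ) + Mmat N ℓ x).det
      = (y • (1 : Matrix (Fin ℓ) (Fin ℓ) ℝ) + MsMat N ℓ x).det := by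
    have := congrArg Matrix.det key
    rwa [Matrix.det_mul, Matrix.det_mul, Wmat_det, mul_one, one_mul] at this
  have hBpos : 0 < (BMat N ℓ x y).det := by
    apply hess_det_pos
    · intro i
      rw [show BMat N ℓ x y i i = BEntry N ℓ x y (i : ℕ) (i : ℕ) from rfl, BEntry_diag]
      have := gProd_pos N (i : ℕ) (i : ℕ)
      positivity
    · intro i j hij
      rw [show BMat N ℓ x y i j = BEntry N ℓ x y (i : ℕ) (j : ℕ) from rfl,
        BEntry_upper N ℓ x y hij]
      have := gProd_pos N (i : ℕ) (j : ℕ)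
      positivity
    · intro i j hij
      rw [show BMat N ℓ x y i j = BEntry N ℓ x y (i : ℕ) (j : ℕ) from rfl, hij, BEntry_sub]
      apply mul_nonpos_of_nonneg_of_nonpos
      · positivity
      · have hjl : (j : ℕ) + 1 ≤ ℓ := j.isLt
        have : ((j : ℕ) : ℝ) + 1 ≤ (ℓ : ℝ) := by exact_mod_cast hjl
        linarith
    · intro i j hij
      rw [show BMat N ℓ x y i j = BEntry N ℓ x y (i : ℕ) (j : ℕ) from rfl,
        BEntry_zero N ℓ x y hij]
  unfold APoly
  rw [hdets, ← TsB_eq, Matrix.det_mul]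
  exact mul_pos (TsMat_det_pos N ℓ) hBpos
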